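/- Let C be a pointed category with finite sums, D an abelian category, and M: C^m → D a multireduced multifunctor (M(X₁,...,X_m) = 0 whenever some X_k = 0). Then for 1 ≤ n < m, the n-th polynomial approximation T_n(M ∘ Δ^m) of the composite with the diagonal functor Δ^m: C → C^m vanishes. -/

import Mathlib

open CategoryTheory CategoryTheory.Limits

universe u v w

variable {C : Type u} [Category.{v} C] [HasZeroMorphisms C] [HasFiniteCoproducts C]

/-- The retraction `r_k : X₁ ∨ ⋯ ∨ X_n → X₁ ∨ ⋯ ∨ X̂_k ∨ ⋯ ∨ X_n` killing the
`k`-th summand. -/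
noncomputable def rhat {ι : Type} [Fintype ι] [DecidableEq ι] (X : ι → C) (k : ι) :
    (∐ X) ⟶ ∐ (fun i : {i : ι // i ≠ k} => X i.1) :=
  Sigma.desc (fun i =>
    if h : i = k then 0 else Sigma.ι (fun i : {i : ι // i ≠ k} => X i.1) ⟨i, h⟩)

/-- The cross-effect `cr F (X₁,…,X_n)` as a subgroup of `F(X₁ ∨ ⋯ ∨ X_n)`. -/
noncomputable def crSub (F : C ⥤ AddCommGrpCat.{w}) {ι : Type} [Fintype ι]
    [DecidableEq ι] (X : ι → C) : AddSubgroup (F.obj (∐ X)) :=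
  ⨅ k : ι, AddMonoidHom.ker (F.map (rhat X k)).hom

open ZeroObject in
/-- If a morphism in the product category has some zero component, a multireduced
multifunctor sends it to zero. -/
lemma multired_map_eq_zero [HasZeroObject C] {m : ℕ}
    (M : (Fin m → C) ⥤ AddCommGrpCat.{w})
    (hM : ∀ (Xs : Fin m → C) (k : Fin m), IsZero (Xs k) → IsZero (M.obj Xs))
    {Xs Ys : Fin m → C} (f : Xs ⟶ Ys) (j₀ : Fin m) (hf : f j₀ = 0) :
    M.map f = 0 := by
  let Z : Fin m → C := fun j => if j = j₀ then 0 else Xs j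
  let a : Xs ⟶ Z := fun j => dite (j = j₀) (fun _ => 0)
    (fun h => eqToHom ((if_neg h).symm : Xs j = Z j))
  let b : Z ⟶ Ys := fun j => dite (j = j₀) (fun _ => 0)
    (fun h => eqToHom ((if_neg h) : Z j = Xs j) ≫ f j)
  have hab : f = a ≫ b := by
    funext j
    by_cases h : j = j₀
    · subst h
      show f j = a j ≫ b j
      simp [a, b, hf]
    · show f j = a j ≫ b j
      simp [a, b, h]
  have hZ : IsZero (M.obj Z) := hM Z j₀ (by
    simpa [Z] using (isZero_zero C))
  rw [hab, M.map_comp, hZ.eq_of_tgt (M.map a) 0, Limits.zero_comp]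

/-- Let `C` be a pointed category with finite sums, `D`
abelian (here `Ab`), and `M : C^m → Ab` a multireduced multifunctor (i.e.
`M(X₁,…,X_m) = 0` whenever some `X_k = 0`).  Then for `1 ≤ n < m` one has
`T_n(M ∘ Δ^m) = 0`, where `Δ^m : C → C^m` is the diagonal.  (Equivalently, as
stated here: the map `S_{n+1} : cr_{n+1}(MΔ^m)(X,…,X) → (MΔ^m)(X)`, given by
the inclusion of the cross-effect followed by the fold map, is surjective for
every `X`, so the cokernel `T_n(MΔ^m)` vanishes.) -/
theorem taylor_of_multireduced_diagonal_vanishes [HasZeroObject C]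
    (m n : ℕ) (hn : 1 ≤ n) (hnm : n < m)
    (M : (Fin m → C) ⥤ AddCommGrpCat.{w})
    (hM : ∀ (Xs : Fin m → C) (k : Fin m), IsZero (Xs k) → IsZero (M.obj Xs)) :
    ∀ (X : C) (y : ((Functor.pi' fun _ : Fin m => 𝟭 C) ⋙ M).obj X),
      ∃ z ∈ crSub ((Functor.pi' fun _ : Fin m => 𝟭 C) ⋙ M)
          (fun _ : Fin (n + 1) => X),
        ((Functor.pi' fun _ : Fin m => 𝟭 C) ⋙ M).map
          (Sigma.desc fun _ : Fin (n + 1) => 𝟙 X) z = y := by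
  intro X y
  have hm : n + 1 ≤ m := hnm
  let φ : Fin m → Fin (n + 1) := fun j =>
    if h : (j : ℕ) < n + 1 then ⟨j, h⟩ else ⟨n, Nat.lt_succ_self n⟩
  let g : (fun _ : Fin m => X) ⟶ (fun _ : Fin m => (∐ fun _ : Fin (n + 1) => X)) :=
    fun j => Sigma.ι (fun _ : Fin (n + 1) => X) (φ j)
  refine ⟨M.map g y, ?_, ?_⟩
  · erw [crSub, AddSubgroup.mem_iInf]
    intro k
    erw [AddMonoidHom.mem_ker]
    have h1 : ((Functor.pi' fun _ : Fin m => 𝟭 C) ⋙ M).map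
        (rhat (fun _ : Fin (n + 1) => X) k) (M.map g y)
        = M.map (g ≫ ((Functor.pi' fun _ : Fin m => 𝟭 C).map
            (rhat (fun _ : Fin (n + 1) => X) k))) y := by
      erw [M.map_comp]; rfl
    rw [h1]
    have hz : M.map (g ≫ ((Functor.pi' fun _ : Fin m => 𝟭 C).map
        (rhat (fun _ : Fin (n + 1) => X) k))) = 0 := by
      apply multired_map_eq_zero M hM _ ⟨k, lt_of_lt_of_le k.2 hm⟩
      show Sigma.ι (fun _ : Fin (n + 1) => X) (φ ⟨k, _⟩) ≫
        rhat (fun _ : Fin (n + 1) => X) k = 0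
      have hφ : φ ⟨(k : ℕ), lt_of_lt_of_le k.2 hm⟩ = k := by
        simp [φ, k.2]
        intro h; have := k.2; omega
      rw [hφ, rhat, Sigma.ι_desc, dif_pos rfl]
    rw [hz]
    rfl
  · have h1 : ((Functor.pi' fun _ : Fin m => 𝟭 C) ⋙ M).map
        (Sigma.desc fun _ : Fin (n + 1) => 𝟙 X) (M.map g y)
        = M.map (g ≫ ((Functor.pi' fun _ : Fin m => 𝟭 C).map
            (Sigma.desc fun _ : Fin (n + 1) => 𝟙 X))) y := by
      erw [M.map_comp]; rfl
    rw [h1]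
    have h2 : g ≫ ((Functor.pi' fun _ : Fin m => 𝟭 C).map
        (Sigma.desc fun _ : Fin (n + 1) => 𝟙 X)) = 𝟙 _ := by
      funext j
      show Sigma.ι (fun _ : Fin (n + 1) => X) (φ j) ≫
        Sigma.desc (fun _ : Fin (n + 1) => 𝟙 X) = 𝟙 X
      simp
    erw [h2, M.map_id]
    rfl
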